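/- Suppose A₁₁ is Hurwitz and X₁ ≻ 0 solves the Riccati equation A₁₁X₁ + X₁A₁₁ᵀ + γ²X₁X₁ + A₁₂A₁₂ᵀ = 0, and X₂ ≻ 0 satisfies the strict Riccati inequality A₂₂X₂ + X₂A₂₂ᵀ + X₂X₂ + γ^{−2}A₂₁A₂₁ᵀ ≺ 0 for some γ > 0. Then the block matrix [[A₁₁X₁ + X₁A₁₁ᵀ, A₁₂X₂ + X₁A₂₁ᵀ],[A₂₁X₁ + X₂A₁₂ᵀ, A₂₂X₂ + X₂A₂₂ᵀ]] is negative definite. -/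

import Mathlib

open Matrix

/-- A real square matrix is Hurwitz if all of its (complex) eigenvalues have
negative real part. -/
def IsHurwitz {m : Type*} [Fintype m] [DecidableEq m] (A : Matrix m m ℝ) : Prop :=
  ∀ μ ∈ spectrum ℂ (A.map (algebraMap ℝ ℂ)), μ.re < 0

theorem riccati_solutions_give_block_diag_lyapunov {k₁ k₂ : ℕ}
    (A₁₁ : Matrix (Fin k₁) (Fin k₁) ℝ) (A₁₂ : Matrix (Fin k₁) (Fin k₂) ℝ)
    (A₂₁ : Matrix (Fin k₂) (Fin k₁) ℝ) (A₂₂ : Matrix (Fin k₂) (Fin k₂) ℝ)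
    (X₁ : Matrix (Fin k₁) (Fin k₁) ℝ) (X₂ : Matrix (Fin k₂) (Fin k₂) ℝ)
    (γ : ℝ) (hγ : 0 < γ) (h₁₁ : IsHurwitz A₁₁)
    (hX₁ : X₁.PosDef) (hX₂ : X₂.PosDef)
    (hRic₁ : A₁₁ * X₁ + X₁ * A₁₁ᵀ + (γ ^ 2) • (X₁ * X₁) + A₁₂ * A₁₂ᵀ = 0)
    (hRic₂ : (-(A₂₂ * X₂ + X₂ * A₂₂ᵀ + X₂ * X₂ + (γ ^ 2)⁻¹ • (A₂₁ * A₂₁ᵀ))).PosDef) :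
    (-(Matrix.fromBlocks
        (A₁₁ * X₁ + X₁ * A₁₁ᵀ) (A₁₂ * X₂ + X₁ * A₂₁ᵀ)
        (A₂₁ * X₁ + X₂ * A₁₂ᵀ) (A₂₂ * X₂ + X₂ * A₂₂ᵀ))).PosDef := by
  have hγ' : γ ≠ 0 := ne_of_gt hγ
  have hX₁s : X₁ᵀ = X₁ := by
    have := hX₁.1; rwa [IsHermitian, conjTranspose_eq_transpose_of_trivial] at this
  have hX₂s : X₂ᵀ = X₂ := by
    have := hX₂.1; rwa [IsHermitian, conjTranspose_eq_transpose_of_trivial] at this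
  set R : Matrix (Fin k₂) (Fin k₂) ℝ :=
    -(A₂₂ * X₂ + X₂ * A₂₂ᵀ + X₂ * X₂ + (γ ^ 2)⁻¹ • (A₂₁ * A₂₁ᵀ)) with hRdef
  set U : Matrix (Fin k₁ ⊕ Fin k₂) (Fin k₁ ⊕ Fin k₂) ℝ :=
    fromBlocks (γ • X₁) A₁₂ (-(γ⁻¹ • A₂₁)) (-X₂) with hUdef
  have h11 : A₁₁ * X₁ + X₁ * A₁₁ᵀ = -((γ ^ 2) • (X₁ * X₁) + A₁₂ * A₁₂ᵀ) := by
    have := hRic₁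
    rw [add_assoc (A₁₁ * X₁ + X₁ * A₁₁ᵀ)] at this
    exact eq_neg_of_add_eq_zero_left this
  have e : U * Uᵀ = fromBlocks ((γ ^ 2) • (X₁ * X₁) + A₁₂ * A₁₂ᵀ)
      (-(A₁₂ * X₂ + X₁ * A₂₁ᵀ)) (-(A₂₁ * X₁ + X₂ * A₁₂ᵀ))
      (X₂ * X₂ + (γ ^ 2)⁻¹ • (A₂₁ * A₂₁ᵀ)) := by
    rw [hUdef, fromBlocks_transpose, fromBlocks_multiply, fromBlocks_inj]
    refine ⟨?_, ?_, ?_, ?_⟩ <;>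
      simp [smul_mul_assoc, mul_smul_comm, smul_smul, hX₁s, hX₂s,
        mul_inv_cancel₀ hγ', inv_mul_cancel₀ hγ', sq, mul_inv, add_comm] <;>
      abel
  have key : (-(Matrix.fromBlocks
        (A₁₁ * X₁ + X₁ * A₁₁ᵀ) (A₁₂ * X₂ + X₁ * A₂₁ᵀ)
        (A₂₁ * X₁ + X₂ * A₁₂ᵀ) (A₂₂ * X₂ + X₂ * A₂₂ᵀ)))
      = U * Uᵀ + fromBlocks 0 0 0 R := by
    rw [e, fromBlocks_add, fromBlocks_neg, fromBlocks_inj]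
    refine ⟨?_, ?_, ?_, ?_⟩
    · rw [h11, neg_neg, add_zero]
    · rw [add_zero]
    · rw [add_zero]
    · rw [hRdef]
      abel
  rw [key, posDef_iff_dotProduct_mulVec]
  constructor
  · have h1 : (U * Uᵀ).IsHermitian := by
      have := isHermitian_mul_conjTranspose_self U
      rwa [conjTranspose_eq_transpose_of_trivial] at this
    have h2 : (fromBlocks (0 : Matrix (Fin k₁) (Fin k₁) ℝ) 0 0 R).IsHermitian := by
      rw [IsHermitian, fromBlocks_conjTranspose]
      simp only [conjTranspose_zero]
      rw [hRic₂.1.eq]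
    exact h1.add h2
  · intro x hx
    have hstar : star x = x := by simp
    rw [hstar, add_mulVec, dotProduct_add]
    set x₁ : Fin k₁ → ℝ := x ∘ Sum.inl with hx₁def
    set x₂ : Fin k₂ → ℝ := x ∘ Sum.inr with hx₂def
    have hterm2 : x ⬝ᵥ (fromBlocks 0 0 0 R *ᵥ x) = x₂ ⬝ᵥ (R *ᵥ x₂) := by
      rw [fromBlocks_mulVec]
      simp only [zero_mulVec, zero_add, add_zero]
      have : x = Sum.elim x₁ x₂ := by ext (i | i) <;> rfl
      rw [this]
      simp [sumElim_dotProduct_sumElim]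
    have hterm1 : x ⬝ᵥ ((U * Uᵀ) *ᵥ x) = (Uᵀ *ᵥ x) ⬝ᵥ (Uᵀ *ᵥ x) := by
      rw [← mulVec_mulVec, dotProduct_mulVec, ← mulVec_transpose]
    have hterm1_nonneg : 0 ≤ x ⬝ᵥ ((U * Uᵀ) *ᵥ x) := by
      rw [hterm1]
      exact Finset.sum_nonneg fun i _ => mul_self_nonneg _
    rw [hterm2]
    by_cases hx₂ : x₂ = 0
    · have hx₁ : x₁ ≠ 0 := by
        intro h
        apply hx
        ext (i | i)
        · exact congrFun h i
        · exact congrFun hx₂ i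
      have hw1 : X₁ *ᵥ x₁ ≠ 0 := by
        intro h
        have := hX₁.dotProduct_mulVec_pos hx₁
        rw [h, dotProduct_zero] at this
        exact lt_irrefl 0 this
      have hwne : Uᵀ *ᵥ x ≠ 0 := by
        intro h
        apply hw1
        have hcomp : ∀ i, (Uᵀ *ᵥ x) (Sum.inl i) = γ * (X₁ *ᵥ x₁) i := by
          intro i
          rw [hUdef, fromBlocks_transpose, fromBlocks_mulVec]
          have hxe : x = Sum.elim x₁ x₂ := by ext (j | j) <;> rfl
          rw [hxe]
          simp [hx₂, hX₁s, smul_mulVec]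
        ext i
        have := congrFun h (Sum.inl i)
        rw [hcomp i] at this
        simpa [hγ'] using this
      have : 0 < (Uᵀ *ᵥ x) ⬝ᵥ (Uᵀ *ᵥ x) := by
        rcases lt_or_eq_of_le (Finset.sum_nonneg fun i _ => mul_self_nonneg ((Uᵀ *ᵥ x) i)) with h | h
        · exact h
        · exact absurd (dotProduct_self_eq_zero.mp h.symm) hwne
      rw [hterm1]
      simpa [hx₂] using this
    · have h2pos : 0 < x₂ ⬝ᵥ (R *ᵥ x₂) := by
        have := hRic₂.dotProduct_mulVec_pos hx₂
        simpa using this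
      exact add_pos_of_nonneg_of_pos hterm1_nonneg h2pos
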